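/- Lower bound of the quadratic form of the symmetrized squared Hamiltonian 𝐇 = ½(Ĥᴱ(Ĥᴱ)† + (Ĥᴱ)†Ĥᴱ): for every finitely supported sequence ψ : ℕ → ℂ with ψ 0 = 0, one has Σ_{n≥1} C₀(n/2)·|ψ n|² + Σ_{n≥1} 2·C₊(n/2)·Re((conj (ψ (n+2)))·(ψ n)) ≥ (1/2)·Σ_{n≥1} |ψ n|², where for j = n/2: C₊(j) = −(j² + 2j + 3/8), C₀(1/2) = 17/8 (case n = 1), and C₀(j) = 2j² + 2j + 7/4 for n ≥ 2. (The left-hand side is the inner product ⟨ψ, 𝐇ψ⟩ in the spin-network basis, so the nonzero part of the spectrum of 𝐇 is bounded below by 1/2.) -/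

import Mathlib

/-- C₊(n/2) = −((n/2)² + 2·(n/2) + 3/8). -/
noncomputable def Cplus (n : ℕ) : ℝ := -(((n : ℝ) / 2) ^ 2 + 2 * ((n : ℝ) / 2) + 3 / 8)

/-- C₀(1/2) = 17/8 and C₀(n/2) = 2·(n/2)² + 2·(n/2) + 7/4 for n ≥ 2. -/
noncomputable def Czero (n : ℕ) : ℝ :=
  if n = 1 then 17 / 8 else 2 * ((n : ℝ) / 2) ^ 2 + 2 * ((n : ℝ) / 2) + 7 / 4

lemma Cplus_nonpos (n : ℕ) : Cplus n ≤ 0 := by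
  have h : 0 ≤ ((n : ℝ) / 2) ^ 2 + 2 * ((n : ℝ) / 2) + 3 / 8 := by positivity
  simp only [Cplus]; linarith

/-- Pointwise bound on the cross term. -/
lemma cross_bound (c : ℝ) (hc : c ≤ 0) (a b : ℂ) :
    c * (‖a‖ ^ 2 + ‖b‖ ^ 2) ≤ 2 * c * ((starRingEnd ℂ) b * a).re := by
  have h1 : ((starRingEnd ℂ) b * a).re ≤ ‖a‖ ^ 2 / 2 + ‖b‖ ^ 2 / 2 := by
    have h2 := Complex.re_le_norm ((starRingEnd ℂ) b * a)
    have h3 : ‖(starRingEnd ℂ) b * a‖ = ‖b‖ * ‖a‖ := by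
      rw [norm_mul, Complex.norm_conj]
    nlinarith [sq_nonneg (‖a‖ - ‖b‖)]
  nlinarith [mul_le_mul_of_nonpos_left h1 hc]

/-- Key induction: discrete Schrödinger-type lower bound with dangling boundary terms. -/
lemma ind_lemma (x : ℕ → ℝ) (hx : ∀ m, 0 ≤ x m) (N : ℕ) :
    Cplus N * x (N + 2) + Cplus (N + 1) * x (N + 3) ≤
      ∑ n ∈ Finset.range (N + 1),
        (Czero (n + 1) * x (n + 1) + Cplus (n + 1) * (x (n + 1) + x (n + 3))
          - 1 / 2 * x (n + 1)) := by
  induction N with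
  | zero =>
    rw [Finset.sum_range_one]
    norm_num [Czero, Cplus]
    nlinarith [hx 1, hx 2, hx 3]
  | succ N ih =>
    rw [Finset.sum_range_succ]
    have hco : Cplus N + Czero (N + 2) + Cplus (N + 2) - 1 / 2 = 3 / 2 := by
      simp only [Czero, Cplus]
      rw [if_neg (by omega)]
      push_cast; ring
    have h2 : Cplus N * x (N + 2) + Czero (N + 2) * x (N + 2) + Cplus (N + 2) * x (N + 2)
        - 1 / 2 * x (N + 2) = 3 / 2 * x (N + 2) := by linear_combination x (N + 2) * hco
    nlinarith [ih, hx (N + 2)]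

/-- Lower bound of the quadratic form of 𝐇 = ½(Ĥᴱ(Ĥᴱ)† + (Ĥᴱ)†Ĥᴱ): for every finitely
supported ψ with ψ 0 = 0,
Σ_{n≥1} C₀(n/2)·|ψ n|² + Σ_{n≥1} 2·C₊(n/2)·Re(conj(ψ(n+2))·ψ n) ≥ (1/2)·Σ_{n≥1} |ψ n|². -/
theorem quadratic_form_lower_bound (ψ : ℕ → ℂ)
    (hfin : (Function.support ψ).Finite) (h0 : ψ 0 = 0) :
    (1 / 2) * ∑' n : ℕ, ‖ψ (n + 1)‖ ^ 2 ≤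
      (∑' n : ℕ, Czero (n + 1) * ‖ψ (n + 1)‖ ^ 2) +
        ∑' n : ℕ, 2 * Cplus (n + 1) * ((starRingEnd ℂ) (ψ (n + 3)) * ψ (n + 1)).re := by
  -- find a bound N beyond which ψ vanishes
  obtain ⟨B, hB⟩ := hfin.bddAbove
  set N : ℕ := B + 1 with hNdef
  have hzero : ∀ m, N ≤ m → ψ m = 0 := by
    intro m hm
    by_contra h
    have : m ∈ Function.support ψ := h
    have := hB this
    omega
  -- rewrite the tsums as finite sums over range (N+1)
  have e1 : ∑' n : ℕ, ‖ψ (n + 1)‖ ^ 2 = ∑ n ∈ Finset.range (N + 1), ‖ψ (n + 1)‖ ^ 2 := by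
    refine tsum_eq_sum ?_
    intro n hn
    rw [hzero (n + 1) (by simp [Finset.mem_range] at hn; omega)]
    simp
  have e2 : ∑' n : ℕ, Czero (n + 1) * ‖ψ (n + 1)‖ ^ 2 =
      ∑ n ∈ Finset.range (N + 1), Czero (n + 1) * ‖ψ (n + 1)‖ ^ 2 := by
    refine tsum_eq_sum ?_
    intro n hn
    rw [hzero (n + 1) (by simp [Finset.mem_range] at hn; omega)]
    simp
  have e3 : ∑' n : ℕ, 2 * Cplus (n + 1) * ((starRingEnd ℂ) (ψ (n + 3)) * ψ (n + 1)).re =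
      ∑ n ∈ Finset.range (N + 1),
        2 * Cplus (n + 1) * ((starRingEnd ℂ) (ψ (n + 3)) * ψ (n + 1)).re := by
    refine tsum_eq_sum ?_
    intro n hn
    rw [hzero (n + 1) (by simp [Finset.mem_range] at hn; omega)]
    simp
  rw [e1, e2, e3]
  set x : ℕ → ℝ := fun m => ‖ψ m‖ ^ 2 with hxdef
  have hx : ∀ m, 0 ≤ x m := fun m => by positivity
  -- pointwise bound on the cross terms
  have hpt : ∀ n ∈ Finset.range (N + 1),
      Cplus (n + 1) * (x (n + 1) + x (n + 3)) ≤
        2 * Cplus (n + 1) * ((starRingEnd ℂ) (ψ (n + 3)) * ψ (n + 1)).re := by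
    intro n _
    exact cross_bound _ (Cplus_nonpos (n + 1)) (ψ (n + 1)) (ψ (n + 3))
  have hsum := Finset.sum_le_sum hpt
  -- the key induction lemma with vanishing boundary terms
  have hkey := ind_lemma x hx N
  have hx2 : x (N + 2) = 0 := by rw [hxdef]; simp [hzero (N + 2) (by omega)]
  have hx3 : x (N + 3) = 0 := by rw [hxdef]; simp [hzero (N + 3) (by omega)]
  rw [hx2, hx3, mul_zero, mul_zero, add_zero] at hkey
  rw [Finset.sum_sub_distrib, Finset.sum_add_distrib] at hkey
  rw [← Finset.mul_sum] at hkey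
  linarith [hkey, hsum]
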